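/- Let A ⊆ ℕ have positive upper Banach density, and let (α_n)_{n∈ℤ} be non-negative reals with Σ_{n∈ℤ} α_n = +∞ such that for some C > 0 and N ∈ ℤ ∪ {+∞}, α_n ≥ C·α_{n−1} for all n < N and α_n = 0 for all n ≥ N. For n ∈ A define β_n = Σ_{m∈A} α_{m−n}. Then the family (β_n)_{n∈A} is unbounded. -/

import Mathlib

set_option maxHeartbeats 1600000

open Filter

noncomputable def upperCount (A : Set ℕ) (s : ℕ) : ℝ :=
  limsup (fun k : ℕ => ((A ∩ Set.Icc (k + 1) (k + s)).ncard : ℝ)) atTop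

noncomputable def upperBanachDensity (A : Set ℕ) : ℝ :=
  limsup (fun s : ℕ => upperCount A s / s) atTop

namespace BetaAux

open scoped Classical

/-- The intersection pattern set. -/
def Bset (A : Set ℕ) (d : ℕ) : Set ℕ := {n | n ∈ A ∧ n + d ∈ A}

/-- Finite count of a set in an interval. -/
noncomputable def fcnt (B : Set ℕ) (a b : ℕ) : ℕ := ((Finset.Icc a b).filter (· ∈ B)).card

lemma ncard_eq_fcnt (B : Set ℕ) (a b : ℕ) : (B ∩ Set.Icc a b).ncard = fcnt B a b := by
  rw [fcnt, ← Set.ncard_coe_finset]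
  congr 1
  ext x
  simp [Set.mem_inter_iff, and_comm]

lemma fcnt_le (B : Set ℕ) (a b : ℕ) : fcnt B a b ≤ (Finset.Icc a b).card :=
  Finset.card_filter_le _ _

lemma fcnt_le' (B : Set ℕ) (k s : ℕ) : fcnt B (k+1) (k+s) ≤ s := by
  refine (fcnt_le B _ _).trans ?_
  rw [Nat.card_Icc]; omega

lemma count_nonneg (A : Set ℕ) (k s : ℕ) :
    (0:ℝ) ≤ ((A ∩ Set.Icc (k + 1) (k + s)).ncard : ℝ) := by positivity

lemma count_le (A : Set ℕ) (k s : ℕ) :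
    ((A ∩ Set.Icc (k + 1) (k + s)).ncard : ℝ) ≤ s := by
  have := fcnt_le' A k s
  rw [ncard_eq_fcnt]
  exact_mod_cast this

lemma bddAbove_helper (u : ℕ → ℝ) (b : ℝ) (h : ∀ k, u k ≤ b) :
    IsBoundedUnder (· ≤ ·) atTop u := isBoundedUnder_of ⟨b, h⟩

lemma cobdd_helper (u : ℕ → ℝ) (h : ∀ k, 0 ≤ u k) :
    IsCoboundedUnder (· ≤ ·) atTop u :=
  IsBoundedUnder.isCoboundedUnder_le (isBoundedUnder_of ⟨0, h⟩)

lemma upperCount_nonneg (A : Set ℕ) (s : ℕ) : 0 ≤ upperCount A s :=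
  le_limsup_of_frequently_le (Frequently.of_forall fun k => count_nonneg A k s)
    (bddAbove_helper _ s fun k => count_le A k s)

lemma upperCount_le (A : Set ℕ) (s : ℕ) : upperCount A s ≤ s :=
  limsup_le_of_le (cobdd_helper _ fun k => count_nonneg A k s)
    (Eventually.of_forall fun k => count_le A k s)

/-- Dense windows: there exist arbitrarily remote, arbitrarily long intervals where `A`
has density at least `γ`. -/
lemma windows (A : Set ℕ) (hA : 0 < upperBanachDensity A) :
    ∃ γ : ℝ, 0 < γ ∧ ∀ j : ℕ, ∃ a L, j ≤ a ∧ j ≤ L ∧ 0 < L ∧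
      γ * L < (fcnt A (a+1) (a+L) : ℝ) := by
  set δ := upperBanachDensity A with hδ
  refine ⟨δ/4, by positivity, fun j => ?_⟩
  have hfr : ∃ᶠ s in atTop, δ/2 < upperCount A s / s := by
    apply frequently_lt_of_lt_limsup
    · refine cobdd_helper _ fun s => ?_
      have := upperCount_nonneg A s
      positivity
    · exact half_lt_self hA
  obtain ⟨s, hs, hlt⟩ := (frequently_atTop.mp hfr) (max j 1)
  have hs1 : 1 ≤ s := le_trans (le_max_right _ _) hs
  have hsj : j ≤ s := le_trans (le_max_left _ _) hs
  have hspos : (0:ℝ) < s := by exact_mod_cast hs1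
  have hlt' : δ/4 * s < upperCount A s := by
    have h2 : δ/2 * s < upperCount A s := by
      rw [lt_div_iff₀ hspos] at hlt; exact hlt
    nlinarith
  have hfr2 : ∃ᶠ k in atTop, δ/4 * s < ((A ∩ Set.Icc (k + 1) (k + s)).ncard : ℝ) := by
    apply frequently_lt_of_lt_limsup
    · exact cobdd_helper _ fun k => count_nonneg A k s
    · exact hlt'
  obtain ⟨a, ha, hcnt⟩ := (frequently_atTop.mp hfr2) j
  refine ⟨a, s, ha, hsj, hs1, ?_⟩
  rwa [ncard_eq_fcnt] at hcnt


lemma exists_translates (F : Set ℕ)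
    (hgap : ∀ M : ℕ, ∃ m : ℕ, ∀ x, m+1 ≤ x → x ≤ m+M → x ∉ F) :
    ∃ tr : ℕ → ℕ, (∀ i, 1 ≤ tr i) ∧ (∀ i i', i < i' → tr i < tr i') ∧
      (∀ i i', i < i' → (tr i' - tr i) ∉ F) := by
  choose gp hgp using hgap
  let tr : ℕ → ℕ := fun i => Nat.rec 1 (fun _ prev => gp prev + 1 + prev) i
  have hsucc : ∀ i, tr (i+1) = gp (tr i) + 1 + tr i := fun i => rfl
  have h1 : ∀ i, 1 ≤ tr i := by
    intro i; induction i with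
    | zero => exact le_refl 1
    | succ n ih => rw [hsucc]; omega
  have hm : StrictMono tr := strictMono_nat_of_lt_succ (fun i => by rw [hsucc]; omega)
  refine ⟨tr, h1, fun i i' h => hm h, ?_⟩
  · intro i i' hii
    obtain ⟨j, rfl⟩ : ∃ j, i' = j + 1 := ⟨i' - 1, by omega⟩
    have hij : i ≤ j := by omega
    have hle : tr i ≤ tr j := hm.monotone hij
    have h1i := h1 i
    exact hgp (tr j) _ (by rw [hsucc]; omega) (by rw [hsucc]; omega)

lemma chain (α : ℤ → ℝ) (hnn : ∀ n, 0 ≤ α n) (C c : ℝ) (hc0 : 0 < c) (hcC : c ≤ C)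
    (N : WithTop ℤ) (hgrow : ∀ n : ℤ, (n : WithTop ℤ) < N → C * α (n - 1) ≤ α n) :
    ∀ t : ℕ, ∀ n : ℤ, ((n + t : ℤ) : WithTop ℤ) < N → c^t * α n ≤ α (n + t) := by
  intro t
  induction t with
  | zero => intro n _; simp
  | succ t ih =>
    intro n h
    have hcast : ((t+1 : ℕ) : ℤ) = (t : ℤ) + 1 := by push_cast; ring
    rw [hcast] at h ⊢
    have hle : ((n + t : ℤ) : WithTop ℤ) ≤ ((n + t + 1 : ℤ) : WithTop ℤ) :=
      WithTop.coe_le_coe.mpr (by omega)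
    have hlt : ((n + t : ℤ) : WithTop ℤ) < N := lt_of_le_of_lt hle (by rwa [← add_assoc] at h)
    have h2 := ih n hlt
    have h3 : C * α (n + t) ≤ α (n + t + 1) := by
      have := hgrow (n + t + 1) (by rwa [← add_assoc] at h)
      simpa using this
    have h4 : c * (c^t * α n) ≤ c * α (n + t) := mul_le_mul_of_nonneg_left h2 hc0.le
    have h5 : c * α (n + t) ≤ C * α (n + t) := mul_le_mul_of_nonneg_right hcC (hnn _)
    calc c^(t+1) * α n = c * (c^t * α n) := by ring
    _ ≤ α (n + t + 1) := le_trans h4 (le_trans h5 h3)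
    _ = α (n + ((t:ℤ) + 1)) := by rw [add_assoc]

lemma core_CS (A : Set ℕ) (γ : ℝ) (hγ : 0 < γ) (r : ℕ) (hr1 : 1 ≤ r) (hr : 16 ≤ γ^2 * r)
    (tr : ℕ → ℕ) (hmono : ∀ i i', i < i' → i' < r → tr i < tr i')
    (K0 L R : ℕ) (htrR : ∀ i, i < r → tr i ≤ R) (hK0 : R ≤ K0) (hL0 : 0 < L)
    (hLR : (64:ℝ) * R ≤ γ^2 * L)
    (hdense : γ * L < (fcnt A (K0+1) (K0+L) : ℝ))
    (hsparse : ∀ i i', i < i' → i' < r →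
      (fcnt (Bset A (tr i' - tr i)) (K0+1) (K0+L) : ℝ) < 5/8 * γ^2 * L) : False := by
  classical
  set I : Finset ℕ := Finset.Icc (K0+1-R) (K0+L) with hI
  have hIcard : I.card = L + R := by rw [hI, Nat.card_Icc]; omega
  set χ : ℕ → ℕ → ℝ := fun i n => if n + tr i ∈ A then (1:ℝ) else 0 with hχ
  set f : ℕ → ℝ := fun n => ∑ i ∈ Finset.range r, χ i n with hf
  -- Step A
  have stepA : (r : ℝ) * (fcnt A (K0+1) (K0+L) : ℝ) ≤ ∑ n ∈ I, f n := by
    have hswap : ∑ n ∈ I, f n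
        = ∑ i ∈ Finset.range r, ((I.filter (fun n => n + tr i ∈ A)).card : ℝ) := by
      rw [hf]
      rw [Finset.sum_comm]
      exact Finset.sum_congr rfl fun i _ => by rw [hχ]; rw [Finset.sum_boole]
    rw [hswap]
    have hper : ∀ i ∈ Finset.range r,
        (fcnt A (K0+1) (K0+L) : ℝ) ≤ ((I.filter (fun n => n + tr i ∈ A)).card : ℝ) := by
      intro i hi
      have hiR : tr i ≤ R := htrR i (Finset.mem_range.mp hi)
      have hcard : fcnt A (K0+1) (K0+L) ≤ (I.filter (fun n => n + tr i ∈ A)).card := by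
        apply Finset.card_le_card_of_injOn (fun a => a - tr i)
        · intro a ha
          simp only [fcnt, Finset.mem_coe, Finset.mem_filter, Finset.mem_Icc] at ha
          simp only [Finset.mem_coe, Finset.mem_filter, hI, Finset.mem_Icc]
          have h1 : a - tr i + tr i = a := by omega
          refine ⟨⟨by omega, by omega⟩, by rw [h1]; exact ha.2⟩
        · intro a ha b hb hab
          simp only [fcnt, Finset.coe_filter, Set.mem_setOf_eq, Finset.mem_Icc] at ha hb
          simp only at hab
          omega
      exact_mod_cast hcard
    calc (r:ℝ) * (fcnt A (K0+1) (K0+L) : ℝ)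
        = ∑ _i ∈ Finset.range r, (fcnt A (K0+1) (K0+L) : ℝ) := by
          rw [Finset.sum_const, Finset.card_range, nsmul_eq_mul]
    _ ≤ _ := Finset.sum_le_sum hper
  -- Step B : Cauchy-Schwarz
  have stepB : (∑ n ∈ I, f n)^2 ≤ (I.card : ℝ) * ∑ n ∈ I, (f n)^2 :=
sq_sum_le_card_mul_sum_sq
  -- Step C : expand the square
  set c : ℕ → ℕ → ℕ :=
    fun i i' => (I.filter (fun n => n + tr i ∈ A ∧ n + tr i' ∈ A)).card with hc
  have stepC : ∑ n ∈ I, (f n)^2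
      = ∑ i ∈ Finset.range r, ∑ i' ∈ Finset.range r, (c i i' : ℝ) := by
    have hexp : ∀ n, (f n)^2 = ∑ i ∈ Finset.range r, ∑ i' ∈ Finset.range r, χ i n * χ i' n := by
      intro n; rw [hf, sq, Finset.sum_mul_sum]
    rw [Finset.sum_congr rfl (fun n _ => hexp n), Finset.sum_comm]
    refine Finset.sum_congr rfl fun i _ => ?_
    rw [Finset.sum_comm]
    refine Finset.sum_congr rfl fun i' _ => ?_
    have hmul : ∀ n, χ i n * χ i' n
        = if n + tr i ∈ A ∧ n + tr i' ∈ A then (1:ℝ) else 0 := by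
      intro n
      by_cases h1 : n + tr i ∈ A <;> by_cases h2 : n + tr i' ∈ A <;> simp [hχ, h1, h2]
    rw [Finset.sum_congr rfl (fun n _ => hmul n), Finset.sum_boole, hc]
  -- Step D : bounds on the pair counts
  have hdiag : ∀ i i', (c i i' : ℝ) ≤ (L:ℝ) + R := by
    intro i i'
    have : c i i' ≤ I.card := Finset.card_filter_le _ _
    rw [hIcard] at this
    exact_mod_cast this
  have hsymm : ∀ i i', c i i' = c i' i := by
    intro i i'
    simp only [hc]
    congr 1
    apply Finset.filter_congr
    intro n _
    tauto
  have hofflt : ∀ i i', i < i' → i' < r → (c i i' : ℝ) < 5/8*γ^2*L + 2*R := by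
    intro i i' hii hi'r
    have hiR : tr i ≤ R := htrR i (by omega)
    have hi'R : tr i' ≤ R := htrR i' hi'r
    have htri : tr i < tr i' := hmono i i' hii hi'r
    set d := tr i' - tr i with hd
    -- inject into the B-count on a slightly larger window
    have key : c i i' ≤ fcnt (Bset A d) (K0+1-R) (K0+L+R) := by
      simp only [hc, fcnt]
      apply Finset.card_le_card_of_injOn (fun n => n + tr i)
      · intro n hn
        simp only [Finset.mem_coe, Finset.mem_filter, hI, Finset.mem_Icc] at hn
        simp only [Finset.mem_coe, Finset.mem_filter, Finset.mem_Icc, Bset, Set.mem_setOf_eq]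
        refine ⟨⟨by omega, by omega⟩, hn.2.1, ?_⟩
        show n + tr i + d ∈ A
        have : n + tr i + d = n + tr i' := by omega
        rw [this]; exact hn.2.2
      · intro a _ b _ hab
        simp only at hab
        omega
    have key2 : fcnt (Bset A d) (K0+1-R) (K0+L+R) ≤ fcnt (Bset A d) (K0+1) (K0+L) + 2*R := by
      have hsub : (Finset.Icc (K0+1-R) (K0+L+R)).filter (· ∈ Bset A d)
          ⊆ ((Finset.Icc (K0+1) (K0+L)).filter (· ∈ Bset A d))
            ∪ Finset.Icc (K0+1-R) K0 ∪ Finset.Icc (K0+L+1) (K0+L+R) := by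
        intro n hn
        simp only [Finset.mem_filter, Finset.mem_Icc, Finset.mem_union] at hn ⊢
        by_cases h1 : n ≤ K0
        · exact Or.inl (Or.inr ⟨by omega, by omega⟩)
        · by_cases h2 : n ≤ K0 + L
          · exact Or.inl (Or.inl ⟨⟨by omega, by omega⟩, hn.2⟩)
          · exact Or.inr ⟨by omega, by omega⟩
      simp only [fcnt]
      calc ((Finset.Icc (K0+1-R) (K0+L+R)).filter (· ∈ Bset A d)).card
          ≤ _ := Finset.card_le_card hsub
      _ ≤ ((Finset.Icc (K0+1) (K0+L)).filter (· ∈ Bset A d)).card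
            + (Finset.Icc (K0+1-R) K0).card + (Finset.Icc (K0+L+1) (K0+L+R)).card := by
          refine le_trans (Finset.card_union_le _ _) ?_
          exact Nat.add_le_add_right (Finset.card_union_le _ _) _
      _ ≤ ((Finset.Icc (K0+1) (K0+L)).filter (· ∈ Bset A d)).card + 2*R := by
          rw [Nat.card_Icc, Nat.card_Icc]; omega
    have := hsparse i i' hii hi'r
    have hcast : (c i i' : ℝ) ≤ (fcnt (Bset A d) (K0+1) (K0+L) : ℝ) + 2*R := by
      have := key.trans key2
      push_cast
      exact_mod_cast this
    linarith
  -- Step E : numeric contradiction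
  have hEnn : (0:ℝ) ≤ 5/8*γ^2*L + 2*R := by positivity
  have hsum : ∑ i ∈ Finset.range r, ∑ i' ∈ Finset.range r, (c i i' : ℝ)
      ≤ (r:ℝ)*((L:ℝ)+R) + (r:ℝ)*(r:ℝ)*(5/8*γ^2*L + 2*R) := by
    have hterm : ∀ i ∈ Finset.range r, ∀ i' ∈ Finset.range r,
        (c i i' : ℝ) ≤ (if i = i' then ((L:ℝ)+R) else 0) + (5/8*γ^2*L + 2*R) := by
      intro i hi i' hi'
      rcases lt_trichotomy i i' with h | h | h
      · have h2 := hofflt i i' h (Finset.mem_range.mp hi')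
        rw [if_neg (Nat.ne_of_lt h)]
        linarith
      · subst h
        rw [if_pos rfl]
        linarith [hdiag i i]
      · have h2 := hofflt i' i h (Finset.mem_range.mp hi)
        rw [hsymm i i', if_neg (Nat.ne_of_gt h)]
        linarith
    calc ∑ i ∈ Finset.range r, ∑ i' ∈ Finset.range r, (c i i' : ℝ)
        ≤ ∑ i ∈ Finset.range r, ∑ i' ∈ Finset.range r,
            ((if i = i' then ((L:ℝ)+R) else 0) + (5/8*γ^2*L + 2*R)) :=
          Finset.sum_le_sum fun i hi => Finset.sum_le_sum (hterm i hi)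
    _ = ∑ i ∈ Finset.range r, (((L:ℝ)+R) + (r:ℝ)*(5/8*γ^2*L + 2*R)) := by
          refine Finset.sum_congr rfl fun i hi => ?_
          rw [Finset.sum_add_distrib, Finset.sum_ite_eq, if_pos hi, Finset.sum_const,
            Finset.card_range, nsmul_eq_mul]
    _ = (r:ℝ)*((L:ℝ)+R) + (r:ℝ)*((r:ℝ)*(5/8*γ^2*L + 2*R)) := by
          rw [Finset.sum_const, Finset.card_range, nsmul_eq_mul]; ring
    _ = _ := by ring
  -- assemble
  have hfnn : (0:ℝ) ≤ (r:ℝ) * (fcnt A (K0+1) (K0+L) : ℝ) := by positivity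
  have t1 : (r:ℝ) * (γ * L) ≤ ∑ n ∈ I, f n := by
    have : (r:ℝ) * (γ * L) ≤ (r:ℝ) * (fcnt A (K0+1) (K0+L) : ℝ) := by
      apply mul_le_mul_of_nonneg_left hdense.le (by positivity)
    linarith [stepA]
  have t1nn : (0:ℝ) ≤ (r:ℝ) * (γ * L) := by positivity
  have main : ((r:ℝ) * (γ * L))^2
      ≤ ((L:ℝ)+R) * ((r:ℝ)*((L:ℝ)+R) + (r:ℝ)*(r:ℝ)*(5/8*γ^2*L + 2*R)) := by
    have hsq : ((r:ℝ) * (γ * L))^2 ≤ (∑ n ∈ I, f n)^2 := by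
      apply pow_le_pow_left₀ t1nn t1
    have hIc : (I.card : ℝ) = (L:ℝ) + R := by rw [hIcard]; push_cast; ring
    have hrhs : (I.card : ℝ) * ∑ n ∈ I, (f n)^2
        ≤ ((L:ℝ)+R) * ((r:ℝ)*((L:ℝ)+R) + (r:ℝ)*(r:ℝ)*(5/8*γ^2*L + 2*R)) := by
      rw [hIc, stepC]
      apply mul_le_mul_of_nonneg_left hsum (by positivity)
    linarith [stepB]
  have hL0' : (0:ℝ) < L := by exact_mod_cast hL0
  have hr' : (1:ℝ) ≤ r := by exact_mod_cast hr1
  have hAleL : (fcnt A (K0+1) (K0+L) : ℝ) ≤ L := by exact_mod_cast fcnt_le' A K0 L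
  have hγ1 : γ < 1 := by nlinarith
  have hR0 : (0:ℝ) ≤ R := by positivity
  -- reduce: R ≤ γ²L/64 and conclude
  have e3 : (L:ℝ) + R ≤ 65/64 * L := by nlinarith
  have e4 : 5/8*γ^2*L + 2*R ≤ 21/32*(γ^2*L) := by linarith
  have hXnn : (0:ℝ) ≤ (r:ℝ)*((L:ℝ)+R) + (r:ℝ)*(r:ℝ)*(5/8*γ^2*L + 2*R) := by positivity
  have hX' : (r:ℝ)*((L:ℝ)+R) + (r:ℝ)*(r:ℝ)*(5/8*γ^2*L + 2*R)
      ≤ (r:ℝ)*(65/64*L) + (r:ℝ)*(r:ℝ)*(21/32*(γ^2*L)) := by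
    have h1 : (r:ℝ)*((L:ℝ)+R) ≤ (r:ℝ)*(65/64*L) :=
      mul_le_mul_of_nonneg_left e3 (by positivity)
    have h2 : (r:ℝ)*(r:ℝ)*(5/8*γ^2*L + 2*R) ≤ (r:ℝ)*(r:ℝ)*(21/32*(γ^2*L)) :=
      mul_le_mul_of_nonneg_left e4 (by positivity)
    linarith
  have main2 : ((r:ℝ) * (γ * L))^2
      ≤ (65/64*L) * ((r:ℝ)*(65/64*L) + (r:ℝ)*(r:ℝ)*(21/32*(γ^2*L))) := by
    calc ((r:ℝ) * (γ * L))^2 ≤ _ := main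
    _ ≤ _ := mul_le_mul e3 hX' hXnn (by positivity)
  -- final arithmetic
  have h16 : 16*((L:ℝ)*L*r) ≤ γ^2*r*((L:ℝ)*L*r) :=
    mul_le_mul_of_nonneg_right hr (by positivity)
  nlinarith [main2, h16, mul_pos (mul_pos hL0' hL0') (lt_of_lt_of_le zero_lt_one hr')]

lemma divergence (α : ℤ → ℝ) (hnn : ∀ n, 0 ≤ α n)
    (hdiv : (∑' n : ℤ, ENNReal.ofReal (α n)) = ⊤)
    (C : ℝ) (hC : 0 < C) (N : WithTop ℤ)
    (hgrow : ∀ n : ℤ, (n : WithTop ℤ) < N → C * α (n - 1) ≤ α n)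
    (hzero : ∀ n : ℤ, N ≤ (n : WithTop ℤ) → α n = 0)
    (F : Set ℕ) (M : ℕ)
    (g : ℤ → ℤ) (hgF : ∀ x, (g x).natAbs ∈ F) (hgle : ∀ x, x ≤ g x)
    (hgub : ∀ x, g x ≤ x + 2*M) (K' : ℝ) :
    ∃ Φ : Finset ℤ, (∀ k ∈ Φ, k.natAbs ∈ F) ∧
      ENNReal.ofReal K' < ∑ k ∈ Φ, ENNReal.ofReal (α k) := by
  classical
  set c : ℝ := min C 1 with hc
  have hc0 : 0 < c := lt_min hC one_pos
  have hc1 : c ≤ 1 := min_le_right _ _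
  have hcC : c ≤ C := min_le_left _ _
  set D : Set ℤ := {n | ((n + 2*M : ℤ) : WithTop ℤ) < N} with hD
  -- the complement contributes a finite sum
  have hcompl : (∑' n : ↥Dᶜ, ENNReal.ofReal (α ↑n)) ≠ ⊤ := by
    cases N with
    | top =>
      have hDe : Dᶜ = (∅ : Set ℤ) := by
        ext n
        constructor
        · intro h
          exact absurd (WithTop.coe_lt_top (n + 2*(M:ℤ))) h
        · intro h
          exact h.elim
      rw [hDe]
      simp
    | coe z0 =>
      rw [tsum_subtype (Dᶜ) (fun n => ENNReal.ofReal (α n))]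
      have hvanish : ∀ n ∉ Finset.Icc (z0 - 2*M) z0,
          (Dᶜ : Set ℤ).indicator (fun n => ENNReal.ofReal (α n)) n = 0 := by
        intro n hn
        rw [Finset.mem_Icc] at hn
        by_cases hmem : n ∈ Dᶜ
        · have h1 : ¬ ((n + 2*M : ℤ) : WithTop ℤ) < ((z0 : ℤ) : WithTop ℤ) := hmem
          have h2 : z0 ≤ n + 2*M := by
            by_contra hlt
            exact h1 (WithTop.coe_lt_coe.mpr (not_le.mp hlt))
          have h3 : z0 < n := by omega
          rw [Set.indicator_of_mem hmem]
          rw [hzero n (WithTop.coe_le_coe.mpr h3.le)]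
          simp
        · exact Set.indicator_of_notMem hmem _
      rw [tsum_eq_sum hvanish]
      refine (ENNReal.sum_lt_top.mpr fun b _ => ?_).ne
      exact lt_of_le_of_lt (Set.indicator_le_self _ _ b) ENNReal.ofReal_lt_top
  have hDsum : (∑' n : ↥D, ENNReal.ofReal (α ↑n)) = ⊤ := by
    have hsplit := Summable.tsum_add_tsum_compl (s := D) (f := fun n => ENNReal.ofReal (α n))
      ENNReal.summable ENNReal.summable
    rw [hdiv] at hsplit
    by_contra hne
    exact absurd hsplit (by simp [ENNReal.add_ne_top, hne, hcompl])
  -- pointwise comparison on D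
  have hpt : ∀ n : ↥D, ENNReal.ofReal (c^(2*M) * α ↑n) ≤ ENNReal.ofReal (α (g ↑n)) := by
    rintro ⟨n, hn⟩
    set t : ℕ := (g n - n).toNat with ht
    have hgn := hgle n
    have hgn2 := hgub n
    have hgt : g n = n + (t:ℤ) := by rw [ht]; omega
    have htM : t ≤ 2*M := by omega
    have hcond : ((n + (t:ℤ) : ℤ) : WithTop ℤ) < N := by
      rw [← hgt]
      exact lt_of_le_of_lt (WithTop.coe_le_coe.mpr hgn2) hn
    have hchain := chain α hnn C c hc0 hcC N hgrow t n hcond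
    rw [← hgt] at hchain
    refine ENNReal.ofReal_le_ofReal (le_trans ?_ hchain)
    exact mul_le_mul_of_nonneg_right (pow_le_pow_of_le_one hc0.le hc1 htM) (hnn n)
  -- scaled sum over D is ⊤
  have hscaled : (∑' n : ↥D, ENNReal.ofReal (α (g ↑n))) = ⊤ := by
    have heq : ∀ n : ↥D, ENNReal.ofReal (c^(2*M) * α ↑n)
        = ENNReal.ofReal (c^(2*M)) * ENNReal.ofReal (α ↑n) :=
      fun n => ENNReal.ofReal_mul (by positivity)
    have h1 : (∑' n : ↥D, ENNReal.ofReal (c^(2*M) * α ↑n)) = ⊤ := by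
      rw [tsum_congr heq, ENNReal.tsum_mul_left, hDsum, ENNReal.mul_top]
      simp only [ne_eq, ENNReal.ofReal_eq_zero, not_le]
      positivity
    exact top_unique (h1 ▸ ENNReal.tsum_le_tsum hpt)
  -- extract a finite subfamily
  have hiSup := ENNReal.tsum_eq_iSup_sum (f := fun n : ↥D => ENNReal.ofReal (α (g ↑n)))
  rw [hscaled] at hiSup
  have hlt : ENNReal.ofReal ((2*M+1) * K') < ⊤ := ENNReal.ofReal_lt_top
  rw [hiSup] at hlt
  obtain ⟨Ψ, hΨ⟩ := lt_iSup_iff.mp hlt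
  set Ψ' : Finset ℤ := Ψ.image Subtype.val with hΨ'
  have hsum' : ∑ n ∈ Ψ', ENNReal.ofReal (α (g n)) = ∑ n ∈ Ψ, ENNReal.ofReal (α (g ↑n)) :=
    Finset.sum_image (fun a _ b _ h => Subtype.ext h)
  set Φ : Finset ℤ := Ψ'.image g with hΦ
  have hfib : ∑ n ∈ Ψ', ENNReal.ofReal (α (g n))
      ≤ (2*M+1 : ℕ) * ∑ k ∈ Φ, ENNReal.ofReal (α k) := by
    rw [← Finset.sum_fiberwise_of_maps_to (g := g) (fun n hn => Finset.mem_image_of_mem g hn)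
      (fun n => ENNReal.ofReal (α (g n)))]
    rw [Finset.mul_sum]
    refine Finset.sum_le_sum fun k hk => ?_
    have hcongr : ∀ n ∈ Ψ'.filter (fun n => g n = k),
        ENNReal.ofReal (α (g n)) = ENNReal.ofReal (α k) := by
      intro n hn
      rw [(Finset.mem_filter.mp hn).2]
    rw [Finset.sum_congr rfl hcongr, Finset.sum_const, nsmul_eq_mul]
    apply mul_le_mul_left
    have hsub : Ψ'.filter (fun n => g n = k) ⊆ Finset.Icc (k - 2*M) k := by
      intro n hn
      obtain ⟨_, hgnk⟩ := Finset.mem_filter.mp hn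
      rw [Finset.mem_Icc]
      have := hgle n
      have := hgub n
      omega
    have hcard := Finset.card_le_card hsub
    rw [Int.card_Icc] at hcard
    have : (k + 1 - (k - 2*(M:ℤ))).toNat = 2*M+1 := by omega
    rw [this] at hcard
    exact_mod_cast hcard
  -- conclude
  refine ⟨Φ, ?_, ?_⟩
  · intro k hk
    obtain ⟨n, _, rfl⟩ := Finset.mem_image.mp hk
    exact hgF n
  · have hchain : ENNReal.ofReal ((2*M+1) * K') < (2*M+1 : ℕ) * ∑ k ∈ Φ, ENNReal.ofReal (α k) :=
      lt_of_lt_of_le (by rw [← hsum'] at hΨ; exact hΨ) hfib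
    have hM1 : ((2*M+1 : ℕ) : ENNReal) ≠ 0 := by positivity
    have hM2 : ((2*M+1 : ℕ) : ENNReal) ≠ ⊤ := ENNReal.natCast_ne_top _
    have hsplit : ENNReal.ofReal ((2*M+1) * K') = (2*M+1 : ℕ) * ENNReal.ofReal K' := by
      rw [ENNReal.ofReal_mul (by positivity)]
      congr 1
      rw [← ENNReal.ofReal_natCast (2*M+1)]
      congr 1
      push_cast
      ring
    rw [hsplit] at hchain
    exact (ENNReal.mul_right_strictMono hM1 hM2).lt_iff_lt.mp hchain

lemma final (A : Set ℕ) (γ : ℝ) (hγ : 0 < γ) (K : ℝ)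
    (α : ℤ → ℝ) (hnn : ∀ n, 0 ≤ α n)
    (hcon : ∀ n ∈ A, (∑' m : A, ENNReal.ofReal (α ((m : ℕ) - (n : ℤ)))) ≤ ENNReal.ofReal K)
    (Φ : Finset ℤ) (T0 : ℕ) (hT0 : ∀ k ∈ Φ, k.natAbs ≤ T0)
    (a L : ℕ) (haT : T0 ≤ a) (hLT : 2*T0 ≤ L) (hL0 : 0 < L)
    (hsum : ENNReal.ofReal (8/γ^2*(max K 0 + 1)) < ∑ k ∈ Φ, ENNReal.ofReal (α k))
    (hcnt : ∀ k ∈ Φ, γ^2/4 * L < (fcnt (Bset A k.natAbs) (a+1) (a+L) : ℝ)) : False := by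
  classical
  set Kp : ℝ := max K 0 with hKp
  have hKp0 : 0 ≤ Kp := le_max_right _ _
  set β : ℕ → ENNReal := fun n => ∑' m : A, ENNReal.ofReal (α ((m : ℕ) - (n : ℤ))) with hβ
  set P : ℕ → ℤ → Prop := fun n k => 0 ≤ (n:ℤ)+k ∧ ((n:ℤ)+k).toNat ∈ A with hP
  set T : Finset ℕ := (Finset.Icc (a+1-T0) (a+L+T0)).filter (· ∈ A) with hT
  have hTA : ∀ n ∈ T, n ∈ A := fun n hn => (Finset.mem_filter.mp hn).2
  have hTcard : T.card ≤ 2*L := by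
    refine le_trans (Finset.card_filter_le _ _) ?_
    rw [Nat.card_Icc]; omega
  -- upper bound
  have hupper : ∑ n ∈ T, β n ≤ (T.card : ENNReal) * ENNReal.ofReal Kp := by
    calc ∑ n ∈ T, β n ≤ ∑ _n ∈ T, ENNReal.ofReal Kp := by
          refine Finset.sum_le_sum fun n hn => ?_
          exact le_trans (hcon n (hTA n hn)) (ENNReal.ofReal_le_ofReal (le_max_left _ _))
    _ = (T.card : ENNReal) * ENNReal.ofReal Kp := by
          rw [Finset.sum_const, nsmul_eq_mul]
  -- lower bound for each n : the Φ-indexed part of β n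
  have hlow1 : ∀ n ∈ T,
      ∑ k ∈ Φ.filter (P n), ENNReal.ofReal (α k) ≤ β n := by
    intro n hn
    have hmem : ∀ x : {k // k ∈ Φ.filter (P n)}, (((n:ℤ) + x.1).toNat) ∈ A :=
      fun x => ((Finset.mem_filter.mp x.2).2).2
    set e : {k // k ∈ Φ.filter (P n)} → ↥A := fun x => ⟨((n:ℤ) + x.1).toNat, hmem x⟩ with he
    have hinj : ∀ x ∈ (Φ.filter (P n)).attach, ∀ y ∈ (Φ.filter (P n)).attach,
        e x = e y → x = y := by
      intro x _ y _ hxy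
      have hx : 0 ≤ (n:ℤ) + x.1 := ((Finset.mem_filter.mp x.2).2).1
      have hy : 0 ≤ (n:ℤ) + y.1 := ((Finset.mem_filter.mp y.2).2).1
      have := congrArg (fun m : ↥A => (m : ℕ)) hxy
      simp only [he] at this
      exact Subtype.ext (by omega)
    have hstep : ∑ k ∈ Φ.filter (P n), ENNReal.ofReal (α k)
        = ∑ m ∈ (Φ.filter (P n)).attach.image e, ENNReal.ofReal (α ((m : ℕ) - (n : ℤ))) := by
      rw [Finset.sum_image hinj]
      rw [← Finset.sum_attach (Φ.filter (P n)) (fun k => ENNReal.ofReal (α k))]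
      refine Finset.sum_congr rfl fun x _ => ?_
      congr 2
      have hx : 0 ≤ (n:ℤ) + x.1 := ((Finset.mem_filter.mp x.2).2).1
      simp only [he]
      omega
    rw [hstep, hβ]
    exact ENNReal.sum_le_tsum _
  -- swap the double sum
  have hswap : ∑ n ∈ T, ∑ k ∈ Φ.filter (P n), ENNReal.ofReal (α k)
      = ∑ k ∈ Φ, ((T.filter (fun n => P n k)).card : ENNReal) * ENNReal.ofReal (α k) := by
    have h1 : ∀ n, ∑ k ∈ Φ.filter (P n), ENNReal.ofReal (α k)
        = ∑ k ∈ Φ, if P n k then ENNReal.ofReal (α k) else 0 := by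
      intro n; rw [Finset.sum_filter]
    rw [Finset.sum_congr rfl fun n _ => h1 n, Finset.sum_comm]
    refine Finset.sum_congr rfl fun k _ => ?_
    rw [← Finset.sum_filter, Finset.sum_const, nsmul_eq_mul]
  -- per-k count lower bound
  have hcount : ∀ k ∈ Φ, ENNReal.ofReal (γ^2/4 * L) ≤ ((T.filter (fun n => P n k)).card : ENNReal) := by
    intro k hk
    have hcard : fcnt (Bset A k.natAbs) (a+1) (a+L) ≤ (T.filter (fun n => P n k)).card := by
      rcases le_or_gt 0 k with hk0 | hk0
      · apply Finset.card_le_card_of_injOn (fun n => n)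
        · intro n hn
          simp only [fcnt, Finset.mem_coe, Finset.mem_filter, Finset.mem_Icc, Bset, Set.mem_setOf_eq] at hn
          have hT0k := hT0 k hk
          simp only [Finset.mem_coe, Finset.mem_filter, hT, Finset.mem_Icc, hP]
          refine ⟨⟨⟨by omega, by omega⟩, hn.2.1⟩, by omega, ?_⟩
          have : ((n:ℤ) + k).toNat = n + k.natAbs := by omega
          rw [this]; exact hn.2.2
        · intro x _ y _ h; exact h
      · apply Finset.card_le_card_of_injOn (fun n => n + k.natAbs)
        · intro n hn
          simp only [fcnt, Finset.mem_coe, Finset.mem_filter, Finset.mem_Icc, Bset, Set.mem_setOf_eq] at hn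
          have hT0k := hT0 k hk
          simp only [Finset.mem_coe, Finset.mem_filter, hT, Finset.mem_Icc, hP]
          refine ⟨⟨⟨by omega, by omega⟩, hn.2.2⟩, by omega, ?_⟩
          have : (((n + k.natAbs : ℕ):ℤ) + k).toNat = n := by omega
          rw [this]; exact hn.2.1
        · intro x _ y _ h; simp only at h; omega
    calc ENNReal.ofReal (γ^2/4 * L) ≤ ENNReal.ofReal (fcnt (Bset A k.natAbs) (a+1) (a+L) : ℝ) :=
          ENNReal.ofReal_le_ofReal (hcnt k hk).le
    _ = ((fcnt (Bset A k.natAbs) (a+1) (a+L) : ℕ) : ENNReal) := ENNReal.ofReal_natCast _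
    _ ≤ _ := by exact_mod_cast hcard
  -- combine
  have hlower : ENNReal.ofReal (γ^2/4 * L) * ∑ k ∈ Φ, ENNReal.ofReal (α k) ≤ ∑ n ∈ T, β n := by
    calc ENNReal.ofReal (γ^2/4 * L) * ∑ k ∈ Φ, ENNReal.ofReal (α k)
        = ∑ k ∈ Φ, ENNReal.ofReal (γ^2/4 * L) * ENNReal.ofReal (α k) := by
          rw [Finset.mul_sum]
    _ ≤ ∑ k ∈ Φ, ((T.filter (fun n => P n k)).card : ENNReal) * ENNReal.ofReal (α k) :=
          Finset.sum_le_sum fun k hk => mul_le_mul_left (hcount k hk) _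
    _ = ∑ n ∈ T, ∑ k ∈ Φ.filter (P n), ENNReal.ofReal (α k) := hswap.symm
    _ ≤ ∑ n ∈ T, β n := Finset.sum_le_sum hlow1
  -- final numeric contradiction
  have hchain : ENNReal.ofReal (γ^2/4 * L) * ENNReal.ofReal (8/γ^2*(Kp + 1))
      ≤ ((2*L : ℕ) : ENNReal) * ENNReal.ofReal Kp := by
    calc ENNReal.ofReal (γ^2/4 * L) * ENNReal.ofReal (8/γ^2*(Kp + 1))
        ≤ ENNReal.ofReal (γ^2/4 * L) * ∑ k ∈ Φ, ENNReal.ofReal (α k) :=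
          mul_le_mul_right hsum.le _
    _ ≤ ∑ n ∈ T, β n := hlower
    _ ≤ (T.card : ENNReal) * ENNReal.ofReal Kp := hupper
    _ ≤ ((2*L : ℕ) : ENNReal) * ENNReal.ofReal Kp := by
          exact mul_le_mul_left (by exact_mod_cast hTcard) _
  have hL0' : (0:ℝ) < L := by exact_mod_cast hL0
  have heq1 : ENNReal.ofReal (γ^2/4 * L) * ENNReal.ofReal (8/γ^2*(Kp + 1))
      = ENNReal.ofReal (2*L*(Kp+1)) := by
    rw [← ENNReal.ofReal_mul (by positivity)]
    congr 1
    field_simp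
    ring
  have heq2 : ((2*L : ℕ) : ENNReal) * ENNReal.ofReal Kp = ENNReal.ofReal (2*L*Kp) := by
    rw [← ENNReal.ofReal_natCast, ← ENNReal.ofReal_mul (by positivity)]
    congr 1
    push_cast
    ring
  rw [heq1, heq2] at hchain
  have := (ENNReal.ofReal_le_ofReal_iff (by positivity)).mp hchain
  nlinarith

end BetaAux
open BetaAux in
/-- If `A` has positive upper Banach density and `(α_n)` is a non-negative,
geometrically controlled sequence with divergent total sum, then the correlation
sums `β_n = Σ_{m ∈ A} α_{m−n}` are unbounded over `n ∈ A`. -/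
theorem beta_unbounded (A : Set ℕ) (hA : 0 < upperBanachDensity A)
    (α : ℤ → ℝ) (hnn : ∀ n, 0 ≤ α n)
    (hdiv : (∑' n : ℤ, ENNReal.ofReal (α n)) = ⊤)
    (C : ℝ) (hC : 0 < C) (N : WithTop ℤ)
    (hgrow : ∀ n : ℤ, (n : WithTop ℤ) < N → C * α (n - 1) ≤ α n)
    (hzero : ∀ n : ℤ, N ≤ (n : WithTop ℤ) → α n = 0) :
    ∀ K : ℝ, ∃ n ∈ A,
      ENNReal.ofReal K < ∑' m : A, ENNReal.ofReal (α ((m : ℕ) - (n : ℤ))) := by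
  classical
  obtain ⟨γ, hγ, hw⟩ := windows A hA
  choose aof Lof haj hLj hLpos hcount using hw
  set U : Ultrafilter ℕ := Ultrafilter.of atTop with hUdef
  have hU : (U : Filter ℕ) ≤ atTop := Ultrafilter.of_le _
  set seq : ℕ → ℕ → ℝ :=
    fun d j => (fcnt (Bset A d) (aof j + 1) (aof j + Lof j) : ℝ) / Lof j with hseq
  have hseq0 : ∀ d j, 0 ≤ seq d j := fun d j => by positivity
  have hseq1 : ∀ d j, seq d j ≤ 1 := by
    intro d j
    have h1 : (fcnt (Bset A d) (aof j + 1) (aof j + Lof j) : ℝ) ≤ Lof j := by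
      exact_mod_cast fcnt_le' (Bset A d) (aof j) (Lof j)
    have h2 : (0:ℝ) < Lof j := by exact_mod_cast hLpos j
    rw [hseq, div_le_one h2]
    exact h1
  set dF : ℕ → ℝ := fun d => limsup (seq d) (U : Filter ℕ) with hdF
  set F : Set ℕ := {d | 1 ≤ d ∧ γ^2/2 ≤ dF d} with hF
  -- density windows for members of F
  have hFdense : ∀ d, d ∈ F →
      {j | γ^2/4 * Lof j < (fcnt (Bset A d) (aof j + 1) (aof j + Lof j) : ℝ)} ∈ U := by
    intro d hd
    have hcob : IsCoboundedUnder (· ≤ ·) (U : Filter ℕ) (seq d) :=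
      IsBoundedUnder.isCoboundedUnder_le (isBoundedUnder_of ⟨0, fun j => hseq0 d j⟩)
    have hlt : γ^2/4 < limsup (seq d) (U : Filter ℕ) :=
      lt_of_lt_of_le (by nlinarith) hd.2
    have hfreq : ∃ᶠ j in (U : Filter ℕ), γ^2/4 < seq d j :=
      frequently_lt_of_lt_limsup hcob hlt
    have hev : ∀ᶠ j in (U : Filter ℕ), γ^2/4 < seq d j := hfreq.eventually
    refine Filter.mem_of_superset hev ?_
    intro j hj
    have h2 : (0:ℝ) < Lof j := by exact_mod_cast hLpos j
    rw [Set.mem_setOf_eq]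
    have := (lt_div_iff₀ h2).mp hj
    exact this
  -- sparsity windows for non-members
  have hFsparse : ∀ d, d ∉ F → 1 ≤ d →
      {j | (fcnt (Bset A d) (aof j + 1) (aof j + Lof j) : ℝ) < 5/8*γ^2 * Lof j} ∈ U := by
    intro d hdF' hd1
    have hlim : dF d < γ^2/2 := by
      by_contra hge
      exact hdF' ⟨hd1, le_of_not_gt hge⟩
    have hev : ∀ᶠ j in (U : Filter ℕ), seq d j < 5/8*γ^2 := by
      refine eventually_lt_of_limsup_lt (lt_of_lt_of_le hlim (by nlinarith)) ?_
      exact isBoundedUnder_of ⟨1, fun j => hseq1 d j⟩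
    refine Filter.mem_of_superset hev ?_
    intro j hj
    have h2 : (0:ℝ) < Lof j := by exact_mod_cast hLpos j
    rw [Set.mem_setOf_eq]
    have := (div_lt_iff₀ h2).mp hj
    exact this
  -- F is syndetic
  have hsynd : ∃ M : ℕ, ∀ m : ℕ, ∃ x, x ∈ F ∧ m+1 ≤ x ∧ x ≤ m+M := by
    by_contra hcon
    push_neg at hcon
    have hgap : ∀ M : ℕ, ∃ m, ∀ x, m+1 ≤ x → x ≤ m+M → x ∉ F := by
      intro M
      obtain ⟨m, hm⟩ := hcon M
      exact ⟨m, fun x h1 h2 hxF => by have := hm x hxF h1; omega⟩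
    obtain ⟨tr, htr1, htrmono, htrF⟩ := exists_translates F hgap
    set r : ℕ := max 1 ⌈(16/γ^2 : ℝ)⌉₊ with hr
    have hr1 : 1 ≤ r := le_max_left _ _
    have hr16 : 16 ≤ γ^2 * r := by
      have h1 : (16/γ^2 : ℝ) ≤ (⌈(16/γ^2 : ℝ)⌉₊ : ℝ) := Nat.le_ceil _
      have h2 : ((⌈(16/γ^2 : ℝ)⌉₊ : ℕ) : ℝ) ≤ (r:ℝ) := by
        have h2' : ⌈(16/γ^2 : ℝ)⌉₊ ≤ r := le_max_right _ _
        exact_mod_cast h2'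
      have h3 : (16/γ^2 : ℝ) ≤ (r:ℝ) := le_trans h1 h2
      have h4 : (0:ℝ) < γ^2 := by positivity
      calc (16:ℝ) = γ^2 * (16/γ^2) := by field_simp
      _ ≤ γ^2 * r := by nlinarith
    set R : ℕ := tr r with hR
    have htrR : ∀ i, i < r → tr i ≤ R := fun i hi => (htrmono i r hi).le
    -- the set of good indices j
    have hsets : ∀ d : ℕ, {j | d ∉ F → 1 ≤ d →
        (fcnt (Bset A d) (aof j + 1) (aof j + Lof j) : ℝ) < 5/8*γ^2 * Lof j} ∈ U := by
      intro d
      by_cases hd : d ∉ F ∧ 1 ≤ d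
      · refine Filter.mem_of_superset (hFsparse d hd.1 hd.2) ?_
        intro j hj _ _
        exact hj
      · refine Filter.mem_of_superset Filter.univ_mem ?_
        intro j _ h1 h2
        exact absurd ⟨h1, h2⟩ hd
    have hbig := (Filter.biInter_finset_mem (Finset.range (R+1))).mpr
      (fun d _ => hsets d)
    have hUbig : {j | R ≤ j ∧ (64:ℝ)*R ≤ γ^2 * j} ∈ U := by
      refine hU ?_
      rw [Filter.mem_atTop_sets]
      refine ⟨max R ⌈(64*R/γ^2 : ℝ)⌉₊, fun j hj => ?_⟩
      rw [Set.mem_setOf_eq]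
      have hjR : R ≤ j := le_trans (le_max_left _ _) hj
      have hjc : (⌈(64*R/γ^2 : ℝ)⌉₊ : ℕ) ≤ j := le_trans (le_max_right _ _) hj
      refine ⟨hjR, ?_⟩
      have h1 : (64*R/γ^2 : ℝ) ≤ (⌈(64*R/γ^2 : ℝ)⌉₊ : ℝ) := Nat.le_ceil _
      have h2 : ((⌈(64*R/γ^2 : ℝ)⌉₊ : ℕ) : ℝ) ≤ (j:ℝ) := by exact_mod_cast hjc
      have h4 : (0:ℝ) < γ^2 := by positivity
      have h3 : (64*R/γ^2 : ℝ) ≤ (j:ℝ) := le_trans h1 h2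
      calc (64:ℝ)*R = γ^2 * (64*R/γ^2) := by field_simp
      _ ≤ γ^2 * j := by nlinarith
    obtain ⟨j, hjall⟩ := Filter.nonempty_of_mem (Filter.inter_mem hbig hUbig)
    obtain ⟨hjpairs, hjbig⟩ := hjall
    refine core_CS A γ hγ r hr1 hr16 tr (fun i i' h _ => htrmono i i' h)
      (aof j) (Lof j) R htrR ?_ (hLpos j) ?_ (hcount j) ?_
    · exact le_trans hjbig.1 (haj j)
    · have h5 := hLj j
      have h6 : (γ^2 : ℝ) * j ≤ γ^2 * Lof j := by
        have : (j:ℝ) ≤ Lof j := by exact_mod_cast h5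
        nlinarith
      exact le_trans hjbig.2 h6
    · intro i i' hii hi'r
      have hd1 : 1 ≤ tr i' - tr i := by
        have := htrmono i i' hii
        omega
      have hdnF : (tr i' - tr i) ∉ F := htrF i i' hii
      have hdR : tr i' - tr i ∈ Finset.range (R+1) := by
        have h1 := htrR i' hi'r
        rw [Finset.mem_range]
        omega
      have hj2 := Set.mem_iInter₂.mp hjpairs (tr i' - tr i) hdR
      exact hj2 hdnF hd1
  obtain ⟨M, hMsynd⟩ := hsynd
  -- integer syndeticity
  have hSZ : ∀ x : ℤ, ∃ k : ℤ, k.natAbs ∈ F ∧ x ≤ k ∧ k ≤ x + 2*M := by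
    intro x
    rcases le_or_gt 0 x with hx | hx
    · obtain ⟨f, hfF, hf1, hf2⟩ := hMsynd x.toNat
      exact ⟨(f:ℤ), by simpa using hfF, by omega, by omega⟩
    · rcases le_or_gt x (-(2*(M:ℤ))) with hx2 | hx2
      · obtain ⟨f, hfF, hf1, hf2⟩ := hMsynd (-x - 2*M).toNat
        exact ⟨-(f:ℤ), by simpa using hfF, by omega, by omega⟩
      · obtain ⟨f, hfF, hf1, hf2⟩ := hMsynd 0
        rcases le_or_gt (-(M:ℤ)) x with hx3 | hx3
        · exact ⟨(f:ℤ), by simpa using hfF, by omega, by omega⟩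
        · exact ⟨-(f:ℤ), by simpa using hfF, by omega, by omega⟩
  choose g hgF hgle hgub using hSZ
  -- conclusion
  intro K
  by_contra hcon
  push_neg at hcon
  obtain ⟨Φ, hΦF, hΦsum⟩ := divergence α hnn hdiv C hC N hgrow hzero F M g hgF hgle hgub
    (8/γ^2*(max K 0 + 1))
  set T0 : ℕ := Φ.sup (fun k => k.natAbs) with hT0def
  have hT0 : ∀ k ∈ Φ, k.natAbs ≤ T0 := fun k hk => Finset.le_sup hk
  have hUdense := (Filter.biInter_finset_mem Φ).mpr
    (fun k hk => hFdense k.natAbs (hΦF k hk))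
  have hUbig2 : {j | T0 ≤ j ∧ 2*T0 ≤ j} ∈ U := by
    refine hU ?_
    rw [Filter.mem_atTop_sets]
    exact ⟨2*T0, fun j hj => ⟨by omega, hj⟩⟩
  obtain ⟨j, hjall⟩ := Filter.nonempty_of_mem (Filter.inter_mem hUdense hUbig2)
  obtain ⟨hjd, hjb⟩ := hjall
  refine final A γ hγ K α hnn hcon Φ T0 hT0 (aof j) (Lof j)
    (le_trans hjb.1 (haj j)) (le_trans hjb.2 (hLj j)) (hLpos j) hΦsum ?_
  intro k hk
  have := Set.mem_iInter₂.mp hjd k hk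
  have h2 : (0:ℝ) < Lof j := by exact_mod_cast hLpos j
  rw [Set.mem_setOf_eq] at this
  linarith [this]
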